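/- Fix an integer n ≥ 2, set b := -n + i, and let D ⊆ {0, 1, …, n²} be such that Δ := D − D is sparse. Let (α_j)_{j≥1} be a sequence with α_j ∈ Δ for all j, set α := π((α_j)), and let C(α) := C_{n,D} ∩ (C_{n,D} + α). Suppose there exist a positive integer p, N ≥ 1, and complex numbers v_1, …, v_N such that, with f_i(x) := b^{-p} x + v_i, one has C(α) = ⋃_{i=1}^N f_i(C(α)). Then there exists β = π((β_j)) ∈ C(α) with β_j ∈ D ∩ (D + α_j) for all j such that the sequence of sets ((D ∩ (D + α_j)) − β_j)_{j≥1} is strongly eventually periodic (SEP). -/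

import Mathlib

open Complex Filter Pointwise

/-- `piSum b d = ∑_{j≥1} d_j b^{-j}` (0-indexed: `d j` is the `(j+1)`-st digit). -/
noncomputable def piSum (b : ℂ) (d : ℕ → ℤ) : ℂ :=
  ∑' j : ℕ, (d j : ℂ) * b ^ (-((j : ℤ) + 1))

/-- The restricted digit set `C_{n,D}`. -/
def restrictedDigitSet (n : ℕ) (D : Set ℤ) : Set ℂ :=
  {z | ∃ d : ℕ → ℤ, (∀ j, d j ∈ D) ∧ z = piSum (-(n : ℂ) + Complex.I) d}

/-- `Δ` is sparse: all distinct pairs differ by more than `2` when `n ≥ 5`,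
and by more than `3` when `n ∈ {2, 3, 4}`. -/
def Sparse (n : ℕ) (Δ : Set ℤ) : Prop :=
  ∀ δ ∈ Δ, ∀ δ' ∈ Δ, δ ≠ δ' →
    (5 ≤ n → 2 < |δ - δ'|) ∧ (n = 2 ∨ n = 3 ∨ n = 4 → 3 < |δ - δ'|)

/-- A sequence `(A_j)_{j≥1}` of nonempty subsets of `ℤ` (0-indexed here) is strongly
eventually periodic. -/
def SEPSets (A : ℕ → Set ℤ) : Prop :=
  ∃ p : ℕ, 0 < p ∧ ∃ B C : ℕ → Set ℤ,
    (∀ ℓ < p, (B ℓ).Nonempty ∧ (B ℓ).Finite ∧ (C ℓ).Nonempty ∧ (C ℓ).Finite) ∧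
    (∀ j < p, A j = B j) ∧ (∀ j, p ≤ j → A j = B (j % p) + C (j % p))


section basic
variable {bb : ℂ} (hb : 1 < ‖bb‖)

lemma term_norm (d : ℕ → ℤ) (j : ℕ) :
    ‖(d j : ℂ) * bb ^ (-((j : ℤ) + 1))‖ = |(d j : ℝ)| * (‖bb‖⁻¹) ^ (j+1) := by
  rw [norm_mul, norm_zpow, Complex.norm_intCast]
  congr 1
  rw [← Nat.cast_add_one, zpow_neg, zpow_natCast, inv_pow]

include hb in
lemma summable_aux (d : ℕ → ℤ) (M : ℝ) (hd : ∀ j, |(d j : ℝ)| ≤ M) :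
    Summable (fun j : ℕ => (d j : ℂ) * bb ^ (-((j : ℤ) + 1))) := by
  have hr0 : (0:ℝ) ≤ ‖bb‖⁻¹ := by positivity
  have hr1 : ‖bb‖⁻¹ < 1 := by rw [inv_lt_one_iff₀]; right; exact hb
  apply Summable.of_norm
  have hgeo : Summable (fun j : ℕ => (M * ‖bb‖⁻¹) * (‖bb‖⁻¹) ^ j) :=
    (summable_geometric_of_lt_one hr0 hr1).mul_left _
  apply hgeo.of_nonneg_of_le (fun j => norm_nonneg _)
  intro j
  rw [term_norm]
  have h2 : (0:ℝ) ≤ ‖bb‖⁻¹ * (‖bb‖⁻¹)^j := by positivity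
  calc |(d j:ℝ)| * (‖bb‖⁻¹) ^ (j+1) = |(d j:ℝ)| * (‖bb‖⁻¹ * (‖bb‖⁻¹)^j) := by ring
    _ ≤ M * (‖bb‖⁻¹ * (‖bb‖⁻¹)^j) := mul_le_mul_of_nonneg_right (hd j) h2
    _ = (M * ‖bb‖⁻¹) * (‖bb‖⁻¹)^j := by ring

include hb in
lemma norm_piSum_le (d : ℕ → ℤ) (M : ℝ) (hd : ∀ j, |(d j : ℝ)| ≤ M) :
    ‖piSum bb d‖ ≤ M / (‖bb‖ - 1) := by
  have hM : 0 ≤ M := le_trans (abs_nonneg _) (hd 0)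
  have hr0 : (0:ℝ) ≤ ‖bb‖⁻¹ := by positivity
  have hr1 : ‖bb‖⁻¹ < 1 := by rw [inv_lt_one_iff₀]; right; exact hb
  have hbpos : (0:ℝ) < ‖bb‖ := lt_trans one_pos hb
  have hgeo : Summable (fun j : ℕ => M * ‖bb‖⁻¹ * (‖bb‖⁻¹) ^ j) :=
    (summable_geometric_of_lt_one hr0 hr1).mul_left _
  have h1 : ‖piSum bb d‖ ≤ ∑' j : ℕ, M * ‖bb‖⁻¹ * (‖bb‖⁻¹) ^ j := by
    apply (norm_tsum_le_tsum_norm _).trans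
    · apply Summable.tsum_le_tsum _ _ hgeo
      · intro j
        rw [term_norm]
        have h2 : (0:ℝ) ≤ ‖bb‖⁻¹ * (‖bb‖⁻¹)^j := by positivity
        calc |(d j:ℝ)| * (‖bb‖⁻¹) ^ (j+1) = |(d j:ℝ)| * (‖bb‖⁻¹ * (‖bb‖⁻¹)^j) := by ring
          _ ≤ M * (‖bb‖⁻¹ * (‖bb‖⁻¹)^j) := mul_le_mul_of_nonneg_right (hd j) h2
          _ = (M * ‖bb‖⁻¹) * (‖bb‖⁻¹)^j := by ring
      · exact (summable_aux hb d M hd).norm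
    · exact (summable_aux hb d M hd).norm
  refine h1.trans ?_
  rw [tsum_mul_left, tsum_geometric_of_lt_one hr0 hr1]
  have : ‖bb‖⁻¹ * (1 - ‖bb‖⁻¹)⁻¹ = (‖bb‖ - 1)⁻¹ := by
    rw [← mul_inv]
    congr 1
    rw [mul_sub, mul_one, mul_inv_cancel₀ (ne_of_gt hbpos)]
  rw [div_eq_mul_inv, ← this]
  ring_nf
  exact le_refl _


include hb in
lemma piSum_sub (d e : ℕ → ℤ) (Md Me : ℝ) (hd : ∀ j, |(d j : ℝ)| ≤ Md)
    (he : ∀ j, |(e j : ℝ)| ≤ Me) :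
    piSum bb (fun j => d j - e j) = piSum bb d - piSum bb e := by
  unfold piSum
  rw [← Summable.tsum_sub (summable_aux hb d Md hd) (summable_aux hb e Me he)]
  congr 1; funext j; push_cast; ring

include hb in
lemma piSum_shift (c : ℕ → ℤ) (M : ℝ) (hc : ∀ j, |(c j : ℝ)| ≤ M) (p : ℕ)
    (hbne : bb ≠ 0) :
    piSum bb (fun m => if p ≤ m then c (m - p) else 0) =
      bb ^ (-(p:ℤ)) * piSum bb c := by
  have hM0 : (0:ℝ) ≤ M := le_trans (abs_nonneg _) (hc 0)
  have hshift : ∀ j, |((if p ≤ j then c (j - p) else 0 : ℤ) : ℝ)| ≤ M := by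
    intro j; by_cases h : p ≤ j <;> simp [h, hc, hM0]
  have hsum : Summable (fun m : ℕ =>
      ((if p ≤ m then c (m - p) else 0 : ℤ) : ℂ) * bb ^ (-((m:ℤ)+1))) :=
    summable_aux hb _ M hshift
  unfold piSum
  rw [← Summable.sum_add_tsum_nat_add p hsum]
  have h1 : (∑ i ∈ Finset.range p,
      ((if p ≤ i then c (i - p) else 0 : ℤ) : ℂ) * bb ^ (-((i:ℤ)+1))) = 0 := by
    apply Finset.sum_eq_zero
    intro i hi
    rw [Finset.mem_range] at hi
    simp [Nat.not_le.mpr hi]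
  rw [h1, zero_add, ← tsum_mul_left]
  congr 1; funext i
  have h2 : p ≤ i + p := Nat.le_add_left _ _
  simp only [h2, if_true, Nat.add_sub_cancel]
  rw [← mul_assoc, mul_comm (bb ^ (-(p:ℤ))) ((c i : ℂ)), mul_assoc]
  congr 1
  rw [← zpow_add₀ hbne]
  congr 1
  push_cast; ring

include hb in
lemma tail_eq (γ : ℕ → ℤ) (M : ℝ) (hγ : ∀ j, |(γ j : ℝ)| ≤ M)
    (h0 : piSum bb γ = 0) (k : ℕ) :
    ∑' m : ℕ, (γ (m + k) : ℂ) * bb ^ (-((m:ℤ)+1)) =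
      -∑ j ∈ Finset.range k, (γ j : ℂ) * bb ^ ((k:ℤ) - j - 1) := by
  have hbne : bb ≠ 0 := by
    intro h; rw [h, norm_zero] at hb; linarith
  have hsum := summable_aux hb γ M hγ
  have hsplit := Summable.sum_add_tsum_nat_add (f := fun j : ℕ => (γ j : ℂ) * bb ^ (-((j:ℤ)+1))) k hsum
  unfold piSum at h0
  rw [h0] at hsplit
  have h2 : (∑' m : ℕ, (γ (m + k) : ℂ) * bb ^ (-(((m + k : ℕ):ℤ)+1))) =
      bb ^ (-(k:ℤ)) * ∑' m : ℕ, (γ (m + k) : ℂ) * bb ^ (-((m:ℤ)+1)) := by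
    rw [← tsum_mul_left]
    congr 1; funext m
    rw [← mul_assoc, mul_comm (bb ^ (-(k:ℤ))) ((γ (m+k) : ℂ)), mul_assoc]
    congr 1
    rw [← zpow_add₀ hbne]
    congr 1
    push_cast; ring
  rw [h2] at hsplit
  have h3 : bb ^ (-(k:ℤ)) * ∑' m : ℕ, (γ (m + k) : ℂ) * bb ^ (-((m:ℤ)+1)) =
      -∑ j ∈ Finset.range k, (γ j : ℂ) * bb ^ (-((j:ℤ)+1)) := by
    linear_combination hsplit
  have h4 := congrArg (fun z => bb ^ (k:ℤ) * z) h3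
  rw [← mul_assoc, ← zpow_add₀ hbne, add_neg_cancel, zpow_zero, one_mul] at h4
  rw [h4, mul_neg, neg_inj, Finset.mul_sum]
  apply Finset.sum_congr rfl
  intro j hj
  rw [← mul_assoc, mul_comm (bb ^ (k:ℤ)) ((γ j : ℂ)), mul_assoc]
  congr 1
  rw [← zpow_add₀ hbne]
  congr 1
  ring
end basic

/-- the base `-n+i`. -/
noncomputable def bC (n : ℕ) : ℂ := -(n:ℂ) + Complex.I

lemma norm_bC_sq (n : ℕ) : ‖bC n‖^2 = (n:ℝ)^2 + 1 := by
  rw [← Complex.normSq_eq_norm_sq]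
  simp [bC, Complex.normSq_apply]
  ring

lemma norm_bC_gt (n : ℕ) (hn : 2 ≤ n) : 1 < ‖bC n‖ := by
  have h := norm_bC_sq n
  have hn' : (2:ℝ) ≤ (n:ℝ) := by exact_mod_cast hn
  nlinarith [norm_nonneg (bC n)]

lemma norm_bC_le (n : ℕ) (hn : 2 ≤ n) : ‖bC n‖ ≤ (n:ℝ) + 1/4 := by
  have h := norm_bC_sq n
  have hn' : (2:ℝ) ≤ (n:ℝ) := by exact_mod_cast hn
  nlinarith [norm_nonneg (bC n)]

lemma bC_ne (n : ℕ) (hn : 2 ≤ n) : bC n ≠ 0 := by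
  intro h
  have := norm_bC_gt n hn
  rw [h, norm_zero] at this; linarith

/-- integer state recursion: `st (k+1) = b * st k - γ k` in `ℤ[i]` coordinates. -/
def stF (n : ℕ) (γ : ℕ → ℤ) : ℕ → ℤ × ℤ
  | 0 => (0,0)
  | (k+1) => (-(n:ℤ) * (stF n γ k).1 - (stF n γ k).2 - γ k,
      (stF n γ k).1 - (n:ℤ) * (stF n γ k).2)

lemma step_alg (n : ℕ) (X Y G : ℤ) :
    ((-(n:ℤ)*X - Y - G : ℤ) : ℂ) + ((X - (n:ℤ)*Y : ℤ) : ℂ) * Complex.I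
      = (bC n) * ((X:ℂ) + (Y:ℂ)*Complex.I) - (G:ℂ) := by
  unfold bC
  push_cast
  linear_combination (-(Y:ℂ)) * Complex.I_sq

lemma stF_cast (n : ℕ) (hn : 2 ≤ n) (γ : ℕ → ℤ) (k : ℕ) :
    (((stF n γ k).1 : ℂ) + ((stF n γ k).2 : ℂ) * Complex.I)
      = -∑ j ∈ Finset.range k, (γ j : ℂ) * (bC n) ^ ((k:ℤ) - j - 1) := by
  have hbne := bC_ne n hn
  induction k with
  | zero => simp [stF]
  | succ k IH =>
    rw [Finset.sum_range_succ]
    have hsum : ∑ j ∈ Finset.range k, (γ j : ℂ) * (bC n) ^ (((k+1:ℕ):ℤ) - j - 1)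
        = (bC n) * ∑ j ∈ Finset.range k, (γ j:ℂ) * (bC n)^((k:ℤ) - j - 1) := by
      rw [Finset.mul_sum]
      apply Finset.sum_congr rfl
      intro j hj
      rw [← mul_assoc, mul_comm (bC n) _, mul_assoc]
      congr 1
      rw [show ((k+1:ℕ):ℤ) - (j:ℤ) - 1 = 1 + ((k:ℤ) - j - 1) by push_cast; ring,
        zpow_add₀ hbne, zpow_one]
    rw [hsum]
    have hlast : (γ k : ℂ) * (bC n) ^ (((k+1:ℕ):ℤ) - (k:ℤ) - 1) = (γ k : ℂ) := by
      have : ((k+1:ℕ):ℤ) - (k:ℤ) - 1 = 0 := by push_cast; ring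
      rw [this, zpow_zero, mul_one]
    rw [hlast]
    show ((-(n:ℤ) * (stF n γ k).1 - (stF n γ k).2 - γ k : ℤ) : ℂ)
      + ((stF n γ k).1 - (n:ℤ) * (stF n γ k).2 : ℤ) * Complex.I = _
    rw [step_alg, IH]
    ring

lemma stF_bound (n : ℕ) (hn : 2 ≤ n) (γ : ℕ → ℤ)
    (hγ : ∀ j, |(γ j : ℤ)| ≤ 2*(n:ℤ)^2) (h0 : piSum (bC n) γ = 0) (k : ℕ) :
    (stF n γ k).1 ^ 2 + (stF n γ k).2 ^ 2 ≤ 4*(n:ℤ)^2 + 8*n + 10 := by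
  have hb := norm_bC_gt n hn
  have hγR : ∀ j, |(γ j : ℝ)| ≤ (2*(n:ℝ)^2) := by
    intro j
    have := hγ j
    rw [← Int.cast_abs]
    exact_mod_cast this
  have hγRk : ∀ m, |((γ (m+k) : ℤ) : ℝ)| ≤ (2*(n:ℝ)^2) := fun m => hγR (m+k)
  have htail := tail_eq hb γ _ hγR h0 k
  have hnorm : ‖piSum (bC n) (fun m => γ (m+k))‖ ≤ (2*(n:ℝ)^2) / (‖bC n‖ - 1) :=
    norm_piSum_le hb _ _ hγRk
  have heq : piSum (bC n) (fun m => γ (m+k))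
      = (((stF n γ k).1 : ℂ) + ((stF n γ k).2 : ℂ) * Complex.I) := by
    rw [stF_cast n hn γ k]
    exact htail
  rw [heq] at hnorm
  set s := ‖bC n‖ with hs
  have hs2 : s^2 = (n:ℝ)^2 + 1 := norm_bC_sq n
  have hsle : s ≤ (n:ℝ) + 1/4 := norm_bC_le n hn
  have hn' : (2:ℝ) ≤ (n:ℝ) := by exact_mod_cast hn
  have hdiv : (2*(n:ℝ)^2) / (s - 1) = 2*s + 2 := by
    rw [div_eq_iff (by nlinarith : s - 1 ≠ 0)]
    nlinarith
  rw [hdiv] at hnorm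
  have hnormsq : ‖(((stF n γ k).1 : ℂ) + ((stF n γ k).2 : ℂ) * Complex.I)‖^2
      = (((stF n γ k).1 : ℝ))^2 + (((stF n γ k).2 : ℝ))^2 := by
    have hcast : (((stF n γ k).1 : ℂ) + ((stF n γ k).2 : ℂ) * Complex.I)
        = Complex.mk ((stF n γ k).1 : ℝ) ((stF n γ k).2 : ℝ) := by
      rw [Complex.mk_eq_add_mul_I]
      push_cast; rfl
    rw [hcast, ← Complex.normSq_eq_norm_sq]
    simp [Complex.normSq_apply]
    ring
  have hfin : (((stF n γ k).1 : ℝ))^2 + (((stF n γ k).2 : ℝ))^2 ≤ 4*(n:ℝ)^2 + 8*n + 10 := by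
    rw [← hnormsq]
    have h1 : ‖(((stF n γ k).1 : ℂ) + ((stF n γ k).2 : ℂ) * Complex.I)‖^2 ≤ (2*s+2)^2 := by
      apply pow_le_pow_left₀ (norm_nonneg _) hnorm
    nlinarith
  exact_mod_cast hfin

/-- threshold for the `y`-coordinate escape argument. -/
def mEsc (n : ℕ) : ℤ := if n = 2 then 5 else if n ≤ 4 then 4 else 3

def gcut (n : ℕ) : ℤ := if n ≤ 4 then 3 else 2

section intarg
variable (n : ℕ) (hn : 2 ≤ n) (γ : ℕ → ℤ)
    (hbd : ∀ k, (stF n γ k).1 ^ 2 + (stF n γ k).2 ^ 2 ≤ 4*(n:ℤ)^2 + 8*n + 10)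

include hn hbd in
lemma y_growth (k : ℕ) (hy : mEsc n ≤ |(stF n γ k).2|) :
    |(stF n γ k).2| + 1 ≤ |(stF n γ (k+1)).2| := by
  by_contra hcon
  push_neg at hcon
  set X := (stF n γ k).1 with hX
  set Y := (stF n γ k).2 with hY
  have hrec : (stF n γ (k+1)).2 = X - (n:ℤ)*Y := rfl
  have h1 : |(stF n γ (k+1)).2| ≤ |Y| := by omega
  have h2 : |(n:ℤ)*Y| ≤ |X| + |X - (n:ℤ)*Y| := by
    have := abs_sub_abs_le_abs_sub ((n:ℤ)*Y) X
    have h3 := abs_sub_comm ((n:ℤ)*Y) X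
    omega
  have h4 : (n:ℤ)*|Y| ≤ |X| + |Y| := by
    rw [abs_mul, abs_of_nonneg (by positivity : (0:ℤ) ≤ (n:ℤ))] at h2
    rw [hrec] at h1
    omega
  have hn' : (2:ℤ) ≤ (n:ℤ) := by exact_mod_cast hn
  have h5 : ((n:ℤ)-1)*|Y| ≤ |X| := by linarith
  have h6 : (((n:ℤ)-1)*|Y|)^2 ≤ |X|^2 := by
    apply pow_le_pow_left₀ (mul_nonneg (by linarith) (abs_nonneg _)) h5
  rw [_root_.sq_abs] at h6
  have h7 := hbd k
  rw [← hX, ← hY] at h7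
  have h8 : Y^2 = |Y|^2 := (_root_.sq_abs Y).symm
  -- contradiction by cases on n
  set m := |Y| with hm
  have hm0 : 0 ≤ m := abs_nonneg _
  unfold mEsc at hy
  by_cases hn2 : n = 2
  · subst hn2
    simp at hy
    push_cast at h6 h7
    nlinarith [sq_nonneg (m-5)]
  · by_cases hn4 : n ≤ 4
    · have hcase : n = 3 ∨ n = 4 := by omega
      simp [hn2, hn4] at hy
      rcases hcase with h | h <;> subst h <;> push_cast at h6 h7 <;>
        nlinarith [sq_nonneg (m-4)]
    · simp [hn2, hn4] at hy
      have hn5 : (5:ℤ) ≤ (n:ℤ) := by exact_mod_cast (by omega : 5 ≤ n)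
      nlinarith [sq_nonneg (m - 3), sq_nonneg ((n:ℤ) - 5), mul_nonneg hm0 hm0,
        mul_nonneg (mul_nonneg hm0 hm0) (sub_nonneg.mpr hn5)]
end intarg

section intarg
variable (n : ℕ) (hn : 2 ≤ n) (γ : ℕ → ℤ)
    (hbd : ∀ k, (stF n γ k).1 ^ 2 + (stF n γ k).2 ^ 2 ≤ 4*(n:ℤ)^2 + 8*n + 10)

include hn hbd in
lemma y_bound : ∀ k, |(stF n γ k).2| ≤ mEsc n - 1 := by
  intro k
  by_contra hcon
  push_neg at hcon
  have hstart : mEsc n ≤ |(stF n γ k).2| := by omega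
  have grow : ∀ j : ℕ, mEsc n + j ≤ |(stF n γ (k+j)).2| := by
    intro j
    induction j with
    | zero => simpa using hstart
    | succ j IH =>
      have h1 : mEsc n ≤ |(stF n γ (k+j)).2| := by
        have : (0:ℤ) ≤ (j:ℤ) := by positivity
        linarith
      have := y_growth n hn γ hbd (k+j) h1
      have hc : ((j+1:ℕ):ℤ) = (j:ℤ)+1 := by push_cast; ring
      rw [show k + (j+1) = (k+j)+1 from rfl, hc]
      linarith
  set B : ℤ := 4*(n:ℤ)^2 + 8*n + 10 with hB
  have hBpos : 0 < B := by positivity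
  have hj := grow B.toNat
  have hY2 : ((stF n γ (k+B.toNat)).2)^2 ≤ B := by
    have := hbd (k+B.toNat)
    nlinarith [sq_nonneg ((stF n γ (k+B.toNat)).1)]
  have hcast : (B.toNat : ℤ) = B := Int.toNat_of_nonneg hBpos.le
  rw [hcast] at hj
  have hm : 3 ≤ mEsc n := by
    unfold mEsc
    split
    · norm_num
    · split <;> norm_num
  set Z := |(stF n γ (k+B.toNat)).2| with hZ
  have hZ0 : 0 ≤ Z := abs_nonneg _
  have hZB : Z^2 ≤ B := by rwa [← _root_.sq_abs] at hY2
  have h1 : B + 3 ≤ Z := by linarith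
  have h2 : (B+3)*(B+3) ≤ Z*Z := mul_le_mul h1 h1 (by linarith) (by linarith)
  nlinarith

include hn hbd in
lemma st_zero (hγ : ∀ j, (γ j = 0 ∨ gcut n < |γ j|) ∧ |γ j| ≤ 2*(n:ℤ)^2) :
    ∀ k, stF n γ k = (0,0) := by
  have hyb := y_bound n hn γ hbd
  intro k
  induction k with
  | zero => rfl
  | succ k IH =>
    have e1 : (stF n γ (k+1)).1 = -(n:ℤ) * (stF n γ k).1 - (stF n γ k).2 - γ k := rfl
    have e2 : (stF n γ (k+1)).2 = (stF n γ k).1 - (n:ℤ) * (stF n γ k).2 := rfl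
    have hX : (stF n γ k).1 = 0 := by rw [IH]
    have hY : (stF n γ k).2 = 0 := by rw [IH]
    rw [hX, hY] at e1 e2
    simp at e1 e2
    have e3 : (stF n γ (k+2)).2 = (stF n γ (k+1)).1 - (n:ℤ) * (stF n γ (k+1)).2 := rfl
    rw [e1, e2] at e3
    simp at e3
    -- γ k = 0
    have hgk : γ k = 0 := by
      by_contra hne
      have hgap : gcut n < |γ k| := by
        rcases (hγ k).1 with h | h
        · exact absurd h hne
        · exact h
      have hsmall : |γ k| ≤ mEsc n - 1 := by
        have := hyb (k+2)
        rw [e3] at this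
        rwa [abs_neg] at this
      by_cases hn4 : n ≤ 4
      · by_cases hn2 : n = 2
        · -- n = 2 : need extra step
          subst hn2
          unfold gcut at hgap
          unfold mEsc at hsmall
          simp at hgap hsmall
          have e4 : (stF 2 γ (k+2)).1 =
              -(2:ℤ) * (stF 2 γ (k+1)).1 - (stF 2 γ (k+1)).2 - γ (k+1) := rfl
          rw [e1, e2] at e4
          have e5 : (stF 2 γ (k+3)).2 = (stF 2 γ (k+2)).1 - (2:ℤ) * (stF 2 γ (k+2)).2 := rfl
          rw [e4, e3] at e5
          push_cast at e5
          have h5 : |(stF 2 γ (k+3)).2| ≤ 4 := by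
            have := hyb (k+3)
            unfold mEsc at this
            simpa using this
          have h6 : |γ (k+1)| ≤ 8 := by
            have := (hγ (k+1)).2
            push_cast at this
            omega
          have h7 := abs_le.mp h5
          have h8 := abs_le.mp h6
          have h9 := abs_le.mp hsmall
          have h10 := lt_abs.mp hgap
          rw [e5] at h7
          omega
        · -- n = 3, 4
          unfold gcut at hgap
          unfold mEsc at hsmall
          simp [hn4, hn2] at hgap hsmall
          omega
      · unfold gcut at hgap
        unfold mEsc at hsmall
        simp [hn4, (by omega : ¬ n = 2)] at hgap hsmall
        omega
    rw [hgk] at e1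
    simp at e1
    ext1 <;> simp [e1, e2]

lemma keyU (n : ℕ) (hn : 2 ≤ n) (γ : ℕ → ℤ)
    (hγ : ∀ j, (γ j = 0 ∨ gcut n < |γ j|) ∧ |γ j| ≤ 2*(n:ℤ)^2)
    (h0 : piSum (bC n) γ = 0) : ∀ j, γ j = 0 := by
  have hbd := stF_bound n hn γ (fun j => (hγ j).2) h0
  have hz := st_zero n hn γ hbd hγ
  intro j
  have e1 : (stF n γ (j+1)).1 = -(n:ℤ) * (stF n γ j).1 - (stF n γ j).2 - γ j := rfl
  have h1 : (stF n γ (j+1)).1 = 0 := by rw [hz (j+1)]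
  have h2 : (stF n γ j).1 = 0 := by rw [hz j]
  have h3 : (stF n γ j).2 = 0 := by rw [hz j]
  rw [h1, h2, h3] at e1
  simp at e1
  omega
end intarg

section setlayer
variable (n : ℕ) (hn : 2 ≤ n) (D : Set ℤ) (hD : D ⊆ Set.Icc 0 ((n : ℤ) ^ 2))
  (hsparse : Sparse n (D - D)) (α : ℕ → ℤ) (hα : ∀ j, α j ∈ D - D)

include hD in
lemma Delta_abs : ∀ u ∈ D - D, |u| ≤ (n:ℤ)^2 := by
  intro u hu
  rw [Set.mem_sub] at hu
  obtain ⟨x, hx, y, hy, hxy⟩ := hu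
  have h1 := hD hx
  have h2 := hD hy
  rw [Set.mem_Icc] at h1 h2
  rw [← hxy]
  rw [abs_le]
  omega

include hn hD hsparse in
lemma keyU' (γ : ℕ → ℤ) (hγd : ∀ j, ∃ u ∈ D - D, ∃ v ∈ D - D, γ j = u - v)
    (h0 : piSum (bC n) γ = 0) : ∀ j, γ j = 0 := by
  apply keyU n hn γ _ h0
  intro j
  obtain ⟨u, hu, w, hw, huw⟩ := hγd j
  constructor
  · by_cases he : u = w
    · left; rw [huw, he]; ring
    · right
      have := hsparse u hu w hw he
      rw [huw]
      unfold gcut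
      by_cases h4 : n ≤ 4
      · rw [if_pos h4]; exact this.2 (by omega)
      · rw [if_neg h4]; exact this.1 (by omega)
  · have h1 := Delta_abs n D hD u hu
    have h2 := Delta_abs n D hD w hw
    rw [huw, abs_le] at *
    omega

include hD in
lemma D_abs : ∀ (c : ℕ → ℤ), (∀ j, c j ∈ D) → ∀ j, |((c j : ℤ) : ℝ)| ≤ 2*(n:ℝ)^2 := by
  intro c hc j
  have h := hD (hc j)
  rw [Set.mem_Icc] at h
  rw [← Int.cast_abs]
  have : |c j| ≤ 2*(n:ℤ)^2 := by rw [abs_le]; constructor <;> nlinarith [h.1, h.2]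
  exact_mod_cast this

include hD in
lemma Delta_absR : ∀ (c : ℕ → ℤ), (∀ j, c j ∈ D - D) → ∀ j, |((c j : ℤ) : ℝ)| ≤ 2*(n:ℝ)^2 := by
  intro c hc j
  have h := Delta_abs n D hD _ (hc j)
  rw [← Int.cast_abs]
  have : |c j| ≤ 2*(n:ℤ)^2 := by nlinarith [abs_nonneg (c j)]
  exact_mod_cast this

-- membership in A j
lemma mem_A_iff (j : ℕ) (a : ℤ) : a ∈ D ∩ (D + {α j}) ↔ a ∈ D ∧ a - α j ∈ D := by
  simp only [Set.mem_inter_iff, Set.mem_add, Set.mem_singleton_iff]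
  constructor
  · rintro ⟨h1, x, hx, y, rfl, rfl⟩
    simpa using ⟨h1, hx⟩
  · rintro ⟨h1, h2⟩
    exact ⟨h1, a - α j, h2, α j, rfl, by ring⟩

include hn hD hsparse hα in
lemma piSum_inj (c c' : ℕ → ℤ) (hc : ∀ j, c j ∈ D) (hc' : ∀ j, c' j ∈ D)
    (heq : piSum (bC n) c = piSum (bC n) c') : ∀ j, c j = c' j := by
  have hb := norm_bC_gt n hn
  have h0 : piSum (bC n) (fun j => c j - c' j) = 0 := by
    rw [piSum_sub hb c c' _ _ (D_abs n D hD c hc) (D_abs n D hD c' hc'), heq]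
    ring
  have hd0 : (0:ℤ) ∈ D - D := by
    obtain ⟨x, hx, y, hy, _⟩ := Set.mem_sub.mp (hα 0)
    exact Set.mem_sub.mpr ⟨x, hx, x, hx, by ring⟩
  have hkk := keyU' n hn D hD hsparse (fun j => c j - c' j)
    (fun j => ⟨c j - c' j, Set.mem_sub.mpr ⟨c j, hc j, c' j, hc' j, rfl⟩, 0, hd0, by ring⟩) h0
  intro j
  have h2 : c j - c' j = 0 := hkk j
  omega

include hn hD hsparse hα in
lemma Cα_char :
    restrictedDigitSet n D ∩ (restrictedDigitSet n D + {piSum (bC n) α}) =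
      {z | ∃ c : ℕ → ℤ, (∀ j, c j ∈ D ∩ (D + {α j})) ∧ z = piSum (bC n) c} := by
  have hb := norm_bC_gt n hn
  have hbC : (-(n : ℂ) + Complex.I) = bC n := rfl
  have hαA : ∀ j, (α j : ℤ) ∈ D - D := hα
  have hαabs : ∀ j, |((α j : ℤ):ℝ)| ≤ 2*(n:ℝ)^2 := Delta_absR n D hD α hα
  ext z
  constructor
  · rintro ⟨⟨d, hd, rfl⟩, hz2⟩
    rw [Set.mem_add] at hz2
    obtain ⟨w, hw, y, hy, hwy⟩ := hz2
    obtain ⟨e, he, rfl⟩ := hw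
    rw [Set.mem_singleton_iff] at hy
    subst hy
    rw [hbC] at hwy ⊢
    -- piSum d = piSum e + piSum α
    have hsum0 : piSum (bC n) (fun j => d j - (e j + α j)) = 0 := by
        have hf : ∀ j, |((e j + α j : ℤ):ℝ)| ≤ 4*(n:ℝ)^2 := by
          intro j
          have h1 := D_abs n D hD e he j
          have h2 := hαabs j
          push_cast at *
          calc |(e j : ℝ) + α j| ≤ |(e j:ℝ)| + |(α j:ℝ)| := abs_add_le _ _
            _ ≤ 4*(n:ℝ)^2 := by linarith
        rw [piSum_sub hb d (fun j => e j + α j) _ _ (D_abs n D hD d hd) hf]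
        have hadd : piSum (bC n) (fun j => e j + α j) = piSum (bC n) e + piSum (bC n) α := by
          have : (fun j => e j + α j) = (fun j => e j - (-(α j))) := by funext j; ring
          rw [this, piSum_sub hb e (fun j => -(α j)) _ _ (D_abs n D hD e he)
            (fun j => by rw [Int.cast_neg, abs_neg]; exact hαabs j)]
          have : piSum (bC n) (fun j => -(α j)) = - piSum (bC n) α := by
            have h2 : (fun j => -(α j)) = (fun j => 0 - α j) := by funext j; ring
            rw [h2, piSum_sub hb (fun _ => 0) α _ _
              (fun j => by norm_num; positivity) hαabs]
            have : piSum (bC n) (fun _ => 0) = 0 := by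
              unfold piSum; simp
            rw [this]; ring
          rw [this]; ring
        rw [hadd, ← hwy]
        ring
    have hkey : ∀ j, d j - (e j + α j) = 0 :=
      keyU' n hn D hD hsparse _
        (fun j => ⟨d j - e j, Set.mem_sub.mpr ⟨d j, hd j, e j, he j, rfl⟩, α j, hα j, by ring⟩)
        hsum0
    refine ⟨d, ?_, rfl⟩
    intro j
    rw [mem_A_iff D α]
    have := hkey j
    constructor
    · exact hd j
    · have : d j - α j = e j := by omega
      rw [this]; exact he j
  · rintro ⟨c, hc, rfl⟩
    have hcD : ∀ j, c j ∈ D := fun j => ((mem_A_iff D α j (c j)).mp (hc j)).1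
    have hcD' : ∀ j, c j - α j ∈ D := fun j => ((mem_A_iff D α j (c j)).mp (hc j)).2
    constructor
    · exact ⟨c, hcD, rfl⟩
    · rw [Set.mem_add]
      refine ⟨piSum (bC n) (fun j => c j - α j), ⟨(fun j => c j - α j), hcD', rfl⟩,
        piSum (bC n) α, rfl, ?_⟩
      rw [piSum_sub hb c α _ _ (D_abs n D hD c hcD) hαabs]
      ring

end setlayer

section psi
variable (n : ℕ) (hn : 2 ≤ n) (D : Set ℤ) (hD : D ⊆ Set.Icc 0 ((n : ℤ) ^ 2))
  (hsparse : Sparse n (D - D)) (α : ℕ → ℤ) (hα : ∀ j, α j ∈ D - D)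
  (p : ℕ) (hp : 1 ≤ p) (N : ℕ) (hN : 1 ≤ N) (v : Fin N → ℂ)

include hα in
lemma A_nonempty (j : ℕ) : (D ∩ (D + {α j})).Nonempty := by
  obtain ⟨x, hx, y, hy, hxy⟩ := Set.mem_sub.mp (hα j)
  exact ⟨x, (mem_A_iff D α j x).mpr ⟨hx, by rw [show x - α j = y by omega]; exact hy⟩⟩

include hn hD hsparse hα hp hN in
lemma sumset_step
    (hattrΓ : {z : ℂ | ∃ c : ℕ → ℤ, (∀ j, c j ∈ D ∩ (D + {α j})) ∧ z = piSum (bC n) c} =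
      ⋃ i : Fin N, (fun x => (bC n) ^ (-(p:ℤ)) * x + v i) ''
        {z : ℂ | ∃ c : ℕ → ℤ, (∀ j, c j ∈ D ∩ (D + {α j})) ∧ z = piSum (bC n) c}) :
    ∃ t : Fin N → ℕ → ℤ, ∀ j,
      D ∩ (D + {α (j+p)}) = (D ∩ (D + {α j})) + Set.range (fun i => t i j) := by
  classical
  have hb := norm_bC_gt n hn
  have hbne := bC_ne n hn
  set A : ℕ → Set ℤ := fun j => D ∩ (D + {α j}) with hA
  have hAD : ∀ (c : ℕ → ℤ), (∀ j, c j ∈ A j) → (∀ j, c j ∈ D) :=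
    fun c hc j => ((mem_A_iff D α j (c j)).mp (hc j)).1
  have hd0 : (0:ℤ) ∈ D - D := by
    obtain ⟨x, hx, y, hy, _⟩ := Set.mem_sub.mp (hα 0)
    exact Set.mem_sub.mpr ⟨x, hx, x, hx, by ring⟩
  -- choice of digit representation for the contracted images
  have hΨex : ∀ (i : Fin N) (c : ℕ → ℤ), (∀ j, c j ∈ A j) →
      ∃ c' : ℕ → ℤ, (∀ j, c' j ∈ A j) ∧
        piSum (bC n) c' = (bC n) ^ (-(p:ℤ)) * piSum (bC n) c + v i := by
    intro i c hc
    have hmem : (bC n) ^ (-(p:ℤ)) * piSum (bC n) c + v i ∈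
        {z : ℂ | ∃ c : ℕ → ℤ, (∀ j, c j ∈ A j) ∧ z = piSum (bC n) c} := by
      rw [hattrΓ]
      exact Set.mem_iUnion.mpr ⟨i, ⟨piSum (bC n) c, ⟨c, hc, rfl⟩, rfl⟩⟩
    obtain ⟨c', hc', heq⟩ := hmem
    exact ⟨c', hc', heq.symm⟩
  choose Ψ hΨA hΨeq using hΨex
  -- the translation lemma
  have htrans : ∀ (i : Fin N) (c : ℕ → ℤ) (hc : ∀ j, c j ∈ A j)
      (c' : ℕ → ℤ) (hc' : ∀ j, c' j ∈ A j) (m : ℕ),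
      Ψ i c hc m - Ψ i c' hc' m = (if p ≤ m then c (m-p) - c' (m-p) else 0) := by
    intro i c hc c' hc' m
    set u := Ψ i c hc with hu
    set u' := Ψ i c' hc' with hu'
    set s : ℕ → ℤ := fun m => if p ≤ m then c (m-p) else 0 with hs
    set s' : ℕ → ℤ := fun m => if p ≤ m then c' (m-p) else 0 with hs'
    have hsb : ∀ j, |((s j : ℤ):ℝ)| ≤ 2*(n:ℝ)^2 := by
      intro j
      rw [hs]
      by_cases hj : p ≤ j
      · simp only [hj, if_true]; exact D_abs n D hD c (hAD c hc) (j-p)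
      · simp only [hj, if_false]; norm_num
    have hsb' : ∀ j, |((s' j : ℤ):ℝ)| ≤ 2*(n:ℝ)^2 := by
      intro j
      rw [hs']
      by_cases hj : p ≤ j
      · simp only [hj, if_true]; exact D_abs n D hD c' (hAD c' hc') (j-p)
      · simp only [hj, if_false]; norm_num
    have hπs : piSum (bC n) s = (bC n) ^ (-(p:ℤ)) * piSum (bC n) c :=
      piSum_shift hb c _ (D_abs n D hD c (hAD c hc)) p hbne
    have hπs' : piSum (bC n) s' = (bC n) ^ (-(p:ℤ)) * piSum (bC n) c' :=
      piSum_shift hb c' _ (D_abs n D hD c' (hAD c' hc')) p hbne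
    -- difference sequences
    set d1 : ℕ → ℤ := fun m => u m - u' m with hd1
    set d2 : ℕ → ℤ := fun m => s m - s' m with hd2
    have hbd1 : ∀ j, |((d1 j : ℤ):ℝ)| ≤ 4*(n:ℝ)^2 := by
      intro j
      rw [hd1]
      have h1 := D_abs n D hD u (hAD u (hΨA i c hc)) j
      have h2 := D_abs n D hD u' (hAD u' (hΨA i c' hc')) j
      push_cast at *
      calc |(u j:ℝ) - u' j| ≤ |(u j:ℝ)| + |(u' j:ℝ)| := abs_sub _ _
        _ ≤ 4*(n:ℝ)^2 := by linarith
    have hbd2 : ∀ j, |((d2 j : ℤ):ℝ)| ≤ 4*(n:ℝ)^2 := by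
      intro j
      rw [hd2]
      have h1 := hsb j
      have h2 := hsb' j
      push_cast at *
      calc |(s j:ℝ) - s' j| ≤ |(s j:ℝ)| + |(s' j:ℝ)| := abs_sub _ _
        _ ≤ 4*(n:ℝ)^2 := by linarith
    have hγ0 : piSum (bC n) (fun m => d1 m - d2 m) = 0 := by
      rw [piSum_sub hb d1 d2 _ _ hbd1 hbd2]
      have e1 : piSum (bC n) d1 = piSum (bC n) u - piSum (bC n) u' :=
        piSum_sub hb u u' _ _ (D_abs n D hD u (hAD u (hΨA i c hc)))
          (D_abs n D hD u' (hAD u' (hΨA i c' hc')))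
      have e2 : piSum (bC n) d2 = piSum (bC n) s - piSum (bC n) s' :=
        piSum_sub hb s s' _ _ hsb hsb'
      rw [e1, e2, hΨeq i c hc, hΨeq i c' hc', hπs, hπs']
      ring
    have hγd : ∀ m, ∃ a ∈ D - D, ∃ b ∈ D - D, d1 m - d2 m = a - b := by
      intro m
      refine ⟨u m - u' m, Set.mem_sub.mpr ⟨u m, hAD u (hΨA i c hc) m,
        u' m, hAD u' (hΨA i c' hc') m, rfl⟩, d2 m, ?_, rfl⟩
      rw [hd2, hs, hs']
      by_cases hm : p ≤ m
      · simp only [hm, if_true]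
        exact Set.mem_sub.mpr ⟨c (m-p), hAD c hc (m-p), c' (m-p), hAD c' hc' (m-p), rfl⟩
      · simp only [hm, if_false]
        simpa using hd0
    have := keyU' n hn D hD hsparse _ hγd hγ0 m
    have h2 : d1 m = d2 m := by omega
    rw [hd1, hd2] at h2
    simp only at h2
    rw [h2, hs, hs']
    by_cases hm : p ≤ m <;> simp [hm]
  -- reference digit sequence
  have hAne : ∀ j, (A j).Nonempty := A_nonempty D α hα
  set c0 : ℕ → ℤ := fun j => (hAne j).choose with hc0def
  have hc0 : ∀ j, c0 j ∈ A j := fun j => (hAne j).choose_spec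
  refine ⟨fun i j => Ψ i c0 hc0 (j+p) - c0 j, ?_⟩
  intro j
  ext z
  simp only [Set.mem_add, Set.mem_range]
  constructor
  · -- A (j+p) ⊆ A j + T j
    intro hz
    have hc'' : ∀ m, Function.update c0 (j+p) z m ∈ A m := by
      intro m
      rcases eq_or_ne m (j+p) with h | h
      · subst h; rw [Function.update_self]; exact hz
      · rw [Function.update_of_ne h]; exact hc0 m
    have hmem : piSum (bC n) (Function.update c0 (j+p) z) ∈
        {z : ℂ | ∃ c : ℕ → ℤ, (∀ j, c j ∈ A j) ∧ z = piSum (bC n) c} :=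
      ⟨_, hc'', rfl⟩
    rw [hattrΓ] at hmem
    obtain ⟨i, w, ⟨c, hc, rfl⟩, heq⟩ := Set.mem_iUnion.mp hmem
    simp only at heq
    have hinj := piSum_inj n hn D hD hsparse α hα
      (Function.update c0 (j+p) z) (Ψ i c hc)
      (hAD _ hc'') (hAD _ (hΨA i c hc))
      (by rw [hΨeq i c hc, heq])
    have h1 := hinj (j+p)
    rw [Function.update_self] at h1
    have h2 := htrans i c hc c0 hc0 (j+p)
    rw [if_pos (Nat.le_add_left p j), Nat.add_sub_cancel] at h2
    exact ⟨c j, hc j, Ψ i c0 hc0 (j+p) - c0 j, ⟨i, rfl⟩, by omega⟩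
  · -- A j + T j ⊆ A (j+p)
    rintro ⟨a, ha, y, hy, rfl⟩
    obtain ⟨i, rfl⟩ := hy
    have hcu : ∀ m, Function.update c0 j a m ∈ A m := by
      intro m
      rcases eq_or_ne m j with h | h
      · subst h; rw [Function.update_self]; exact ha
      · rw [Function.update_of_ne h]; exact hc0 m
    have h2 := htrans i (Function.update c0 j a) hcu c0 hc0 (j+p)
    rw [if_pos (Nat.le_add_left p j), Nat.add_sub_cancel, Function.update_self] at h2
    have h3 := hΨA i (Function.update c0 j a) hcu (j+p)
    rw [show Ψ i (Function.update c0 j a) hcu (j+p)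
        = a + (Ψ i c0 hc0 (j+p) - c0 j) by omega] at h3
    exact h3
end psi

namespace SEPhelp

lemma mem_addZ {S T : Set ℤ} {z : ℤ} : z ∈ S + T ↔ ∃ x ∈ S, ∃ y ∈ T, x + y = z :=
  Set.mem_add

lemma sub_singleton (S : Set ℤ) (b : ℤ) : S - {b} = (fun x => x - b) '' S := by
  ext z
  simp [Set.mem_sub]

lemma add_singleton (S : Set ℤ) (b : ℤ) : S + {b} = (fun x => x + b) '' S := by
  ext z
  simp [Set.mem_add]

lemma nonempty_add {S T : Set ℤ} (hS : S.Nonempty) (hT : T.Nonempty) :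
    (S + T).Nonempty := by
  obtain ⟨x, hx⟩ := hS
  obtain ⟨y, hy⟩ := hT
  exact ⟨x + y, Set.add_mem_add hx hy⟩

lemma finite_add {S T : Set ℤ} (hS : S.Finite) (hT : T.Finite) : (S + T).Finite :=
  Set.Finite.add hS hT

lemma sSup_mem' {S : Set ℤ} (hne : S.Nonempty) (hfin : S.Finite) : sSup S ∈ S :=
  Set.Nonempty.csSup_mem hne hfin

lemma sInf_mem' {S : Set ℤ} (hne : S.Nonempty) (hfin : S.Finite) : sInf S ∈ S :=
  Set.Nonempty.csInf_mem hne hfin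

lemma le_sSup' {S : Set ℤ} (hfin : S.Finite) {x : ℤ} (hx : x ∈ S) : x ≤ sSup S :=
  le_csSup hfin.bddAbove hx

lemma sInf_le' {S : Set ℤ} (hfin : S.Finite) {x : ℤ} (hx : x ∈ S) : sInf S ≤ x :=
  csInf_le hfin.bddBelow hx

lemma sSup_add (S T : Set ℤ) (hSne : S.Nonempty) (hSf : S.Finite)
    (hTne : T.Nonempty) (hTf : T.Finite) : sSup (S + T) = sSup S + sSup T := by
  apply le_antisymm
  · apply csSup_le (nonempty_add hSne hTne)
    rintro z hz
    rw [mem_addZ] at hz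
    obtain ⟨x, hx, y, hy, rfl⟩ := hz
    exact add_le_add (le_sSup' hSf hx) (le_sSup' hTf hy)
  · exact le_sSup' (finite_add hSf hTf)
      (Set.add_mem_add (sSup_mem' hSne hSf) (sSup_mem' hTne hTf))

lemma sInf_add (S T : Set ℤ) (hSne : S.Nonempty) (hSf : S.Finite)
    (hTne : T.Nonempty) (hTf : T.Finite) : sInf (S + T) = sInf S + sInf T := by
  apply le_antisymm
  · exact csInf_le (finite_add hSf hTf).bddBelow
      (Set.add_mem_add (sInf_mem' hSne hSf) (sInf_mem' hTne hTf))
  · apply le_csInf (nonempty_add hSne hTne)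
    rintro z hz
    rw [mem_addZ] at hz
    obtain ⟨x, hx, y, hy, rfl⟩ := hz
    exact add_le_add (sInf_le' hSf hx) (sInf_le' hTf hy)

lemma eq_singleton_of_sSup_eq_sInf {T : Set ℤ} (hne : T.Nonempty) (hfin : T.Finite)
    (h : sSup T = sInf T) : T = {sSup T} := by
  ext x
  simp only [Set.mem_singleton_iff]
  constructor
  · intro hx
    have h1 := le_sSup' hfin hx
    have h2 := sInf_le' hfin hx
    omega
  · intro hx
    rw [hx]
    exact sSup_mem' hne hfin

lemma shiftsub (S U : Set ℤ) (a c : ℤ) : (S + U) - {c} = (S - {a}) + (U + {a - c}) := by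
  ext z
  constructor
  · intro hz
    obtain ⟨w, hw, y, hy, hwy⟩ := Set.mem_sub.mp hz
    rw [Set.mem_singleton_iff] at hy
    obtain ⟨x, hx, u, hu, hxu⟩ := Set.mem_add.mp hw
    exact Set.mem_add.mpr ⟨x - a, Set.mem_sub.mpr ⟨x, hx, a, rfl, rfl⟩,
      u + (a - c), Set.mem_add.mpr ⟨u, hu, a - c, rfl, rfl⟩, by omega⟩
  · intro hz
    obtain ⟨w1, hw1, w2, hw2, hw⟩ := Set.mem_add.mp hz
    obtain ⟨x, hx, a', ha', hxa⟩ := Set.mem_sub.mp hw1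
    rw [Set.mem_singleton_iff] at ha'
    obtain ⟨u, hu, c', hc', huc⟩ := Set.mem_add.mp hw2
    rw [Set.mem_singleton_iff] at hc'
    exact Set.mem_sub.mpr ⟨x + u, Set.mem_add.mpr ⟨x, hx, u, hu, rfl⟩, c,
      rfl, by omega⟩

lemma add_sing_sub_sing (S : Set ℤ) (σ b : ℤ) : (S + {σ}) - {b + σ} = S - {b} := by
  ext z
  constructor
  · intro hz
    obtain ⟨w, hw, y, hy, hwy⟩ := Set.mem_sub.mp hz
    rw [Set.mem_singleton_iff] at hy
    obtain ⟨x, hx, u, hu, hxu⟩ := Set.mem_add.mp hw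
    rw [Set.mem_singleton_iff] at hu
    exact Set.mem_sub.mpr ⟨x, hx, b, rfl, by omega⟩
  · intro hz
    obtain ⟨x, hx, b', hb', hxb⟩ := Set.mem_sub.mp hz
    rw [Set.mem_singleton_iff] at hb'
    exact Set.mem_sub.mpr ⟨x + σ, Set.mem_add.mpr ⟨x, hx, σ, rfl, rfl⟩,
      b + σ, rfl, by omega⟩

lemma add_zero_sing (S : Set ℤ) : S + ({0} : Set ℤ) = S := by
  ext z
  simp [Set.mem_add]

/-- iterated sumset of `T ℓ, T (ℓ+p), …` -/
def TSum (T : ℕ → Set ℤ) (ℓ p : ℕ) : ℕ → Set ℤ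
  | 0 => {0}
  | (k+1) => TSum T ℓ p k + T (ℓ + k*p)

lemma TSum_nonempty (T : ℕ → Set ℤ) (hT : ∀ j, (T j).Nonempty) (ℓ p : ℕ) :
    ∀ k, (TSum T ℓ p k).Nonempty := by
  intro k
  induction k with
  | zero => exact ⟨0, rfl⟩
  | succ k IH => exact nonempty_add IH (hT _)

lemma TSum_finite (T : ℕ → Set ℤ) (hT : ∀ j, (T j).Finite) (ℓ p : ℕ) :
    ∀ k, (TSum T ℓ p k).Finite := by
  intro k
  induction k with
  | zero => exact Set.finite_singleton 0
  | succ k IH => exact finite_add IH (hT _)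

lemma A_iter (A T : ℕ → Set ℤ) (p : ℕ) (hsum : ∀ j, A (j+p) = A j + T j) (ℓ : ℕ) :
    ∀ k, A (ℓ + k*p) = A ℓ + TSum T ℓ p k := by
  intro k
  induction k with
  | zero => simp [TSum, add_zero_sing]
  | succ k IH =>
    have h1 : ℓ + (k+1)*p = (ℓ + k*p) + p := by ring
    rw [h1, hsum (ℓ + k*p), IH, TSum, add_assoc]


lemma SEP_of_sumsets (M : ℤ) (A : ℕ → Set ℤ) (p : ℕ) (hp : 1 ≤ p)
    (hAne : ∀ j, (A j).Nonempty)
    (hbdd : ∀ j, A j ⊆ Set.Icc 0 M)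
    (T : ℕ → Set ℤ) (hTne : ∀ j, (T j).Nonempty) (hTfin : ∀ j, (T j).Finite)
    (hsum : ∀ j, A (j+p) = A j + T j) :
    ∃ β : ℕ → ℤ, (∀ j, β j ∈ A j) ∧ SEPSets (fun j => A j - {β j}) := by
  classical
  have hpp : 0 < p := hp
  have hAfin : ∀ j, (A j).Finite := fun j => (Set.finite_Icc 0 M).subset (hbdd j)
  set dia : ℕ → ℤ := fun j => sSup (A j) - sInf (A j) with hdia
  have hdia_step : ∀ j, dia (j+p) = dia j + (sSup (T j) - sInf (T j)) := by
    intro j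
    simp only [hdia]
    rw [hsum j, sSup_add _ _ (hAne j) (hAfin j) (hTne j) (hTfin j),
      sInf_add _ _ (hAne j) (hAfin j) (hTne j) (hTfin j)]
    ring
  have hT_nonneg : ∀ j, 0 ≤ sSup (T j) - sInf (T j) := by
    intro j
    obtain ⟨x, hx⟩ := hTne j
    have h1 := sInf_le' (hTfin j) hx
    have h2 := le_sSup' (hTfin j) hx
    omega
  have hdia_mono : ∀ j, dia j ≤ dia (j+p) := by
    intro j
    have := hdia_step j
    have := hT_nonneg j
    omega
  have hchain : ∀ ℓ k d, dia (ℓ + k*p) ≤ dia (ℓ + (k+d)*p) := by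
    intro ℓ k d
    induction d with
    | zero => simp
    | succ d IH =>
      have h1 : ℓ + (k+(d+1))*p = (ℓ + (k+d)*p) + p := by ring
      rw [h1]
      exact IH.trans (hdia_mono _)
  have hdia_bdd : ∀ j, dia j ≤ M := by
    intro j
    have h1 := hbdd j (sSup_mem' (hAne j) (hAfin j))
    have h2 := hbdd j (sInf_mem' (hAne j) (hAfin j))
    rw [Set.mem_Icc] at h1 h2
    simp only [hdia]
    omega
  have hstabl : ∀ ℓ : ℕ, ∃ k0 : ℕ, ∀ k, k0 ≤ k → dia (ℓ + k*p) = dia (ℓ + k0*p) := by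
    intro ℓ
    obtain ⟨lub, ⟨⟨k0, hdk0⟩, hub⟩⟩ := Int.exists_greatest_of_bdd
      (P := fun z => ∃ k : ℕ, dia (ℓ + k*p) = z)
      ⟨M, fun z ⟨k, hk⟩ => hk ▸ hdia_bdd _⟩ ⟨dia ℓ, ⟨0, by simp⟩⟩
    refine ⟨k0, fun k hk => ?_⟩
    have h1 : dia (ℓ + k0*p) ≤ dia (ℓ + k*p) := by
      have := hchain ℓ k0 (k - k0)
      rwa [show k0 + (k - k0) = k by omega] at this
    have h2 : dia (ℓ + k*p) ≤ lub := hub _ ⟨k, rfl⟩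
    omega
  choose k0f hk0f using hstabl
  set K0 : ℕ := (Finset.range p).sup k0f with hK0
  set u : ℕ := K0 + 1 with hu
  set J : ℕ := p * u with hJ
  have hstabJ : ∀ j, J ≤ j → sSup (T j) = sInf (T j) := by
    intro j hj
    set ℓ := j % p with hℓ
    set k := j / p with hk
    have hjeq : ℓ + k * p = j := Nat.mod_add_div' j p
    have hℓp : ℓ < p := Nat.mod_lt _ hpp
    have hku : u ≤ k := by
      rw [hk, Nat.le_div_iff_mul_le hpp]
      have : p * u = u * p := Nat.mul_comm _ _
      omega
    have hk0K : k0f ℓ ≤ K0 := by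
      rw [hK0]
      exact Finset.le_sup (Finset.mem_range.mpr hℓp)
    have h1 := hk0f ℓ k (by omega)
    have h2 := hk0f ℓ (k+1) (by omega)
    have hjp : ℓ + (k+1)*p = j + p := by
      rw [show ℓ + (k+1)*p = (ℓ + k*p) + p by ring, hjeq]
    have hdia_eq : dia (j+p) = dia j := by
      rw [← hjp, ← hjeq, h2, h1]
    have := hdia_step j
    have := hT_nonneg j
    omega
  set τ : ℕ → ℤ := fun j => sSup (T j) with hτ
  have hTsing : ∀ j, J ≤ j → T j = {τ j} := fun j hj =>
    eq_singleton_of_sSup_eq_sInf (hTne j) (hTfin j) (hstabJ j hj)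
  have hsumJ : ∀ j, J ≤ j → A (j+p) = A j + {τ j} := by
    intro j hj
    rw [hsum j, hTsing j hj]
  set σf : ℕ → ℕ → ℤ := fun ℓ m => ∑ i ∈ Finset.range m, τ (ℓ + i*p) with hσf
  have hshape : ∀ ℓ, J ≤ ℓ → ∀ m, A (ℓ + m*p) = A ℓ + {σf ℓ m} := by
    intro ℓ hℓ m
    induction m with
    | zero =>
      simp only [hσf, Finset.range_zero, Finset.sum_empty]
      rw [show ℓ + 0*p = ℓ by ring, add_zero_sing]
    | succ m IH =>
      rw [show ℓ + (m+1)*p = (ℓ + m*p) + p by ring,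
        hsumJ (ℓ + m*p) (by omega), IH, add_assoc,
        Set.singleton_add_singleton]
      simp only [hσf]
      rw [Finset.sum_range_succ]
  set β0 : ℕ → ℤ := fun j => (hAne j).choose with hβ0def
  have hβ0 : ∀ j, β0 j ∈ A j := fun j => (hAne j).choose_spec
  set ρ : ℕ → ℕ := fun j => J + (j - J) % p with hρdef
  set μ : ℕ → ℕ := fun j => (j - J) / p with hμdef
  have hρfact : ∀ j, J ≤ j → (J ≤ ρ j ∧ ρ j < J + p ∧ ρ j + (μ j)*p = j) := by
    intro j hj
    have h1 : (j - J) % p + (j - J) / p * p = j - J := Nat.mod_add_div' _ p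
    have h2 : (j - J) % p < p := Nat.mod_lt _ hpp
    simp only [hρdef, hμdef]
    omega
  set β : ℕ → ℤ := fun j => if J ≤ j then β0 (ρ j) + σf (ρ j) (μ j) else β0 j with hβdef
  have hAj_eq : ∀ j, J ≤ j → A j = A (ρ j) + {σf (ρ j) (μ j)} := by
    intro j hj
    obtain ⟨ha, _, hc⟩ := hρfact j hj
    have := hshape (ρ j) ha (μ j)
    rwa [hc] at this
  have hβA : ∀ j, β j ∈ A j := by
    intro j
    by_cases hj : J ≤ j
    · simp only [hβdef, if_pos hj]
      rw [hAj_eq j hj]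
      exact Set.add_mem_add (hβ0 _) rfl
    · simp only [hβdef, if_neg hj]
      exact hβ0 j
  have hA'per : ∀ j, J ≤ j → A j - {β j} = A (ρ j) - {β0 (ρ j)} := by
    intro j hj
    rw [hAj_eq j hj]
    simp only [hβdef, if_pos hj]
    exact add_sing_sub_sing _ _ _
  -- assemble SEP
  refine ⟨β, hβA, J + p, by omega, (fun ℓ => A ℓ - {β ℓ}),
    (fun ℓ => if ℓ < J then TSum T ℓ p (u - ℓ/p) + {β0 ℓ - β0 (J + ℓ % p)} else {0}),
    ?_, fun j _ => rfl, ?_⟩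
  · intro ℓ _
    refine ⟨?_, ?_, ?_, ?_⟩
    · obtain ⟨x, hx⟩ := hAne ℓ
      exact ⟨x - β ℓ, Set.mem_sub.mpr ⟨x, hx, β ℓ, rfl, rfl⟩⟩
    · show (A ℓ - {β ℓ}).Finite
      rw [sub_singleton]
      exact (hAfin ℓ).image _
    · show (if ℓ < J then TSum T ℓ p (u - ℓ/p) + {β0 ℓ - β0 (J + ℓ % p)}
        else ({0} : Set ℤ)).Nonempty
      by_cases hℓ : ℓ < J
      · rw [if_pos hℓ]
        exact nonempty_add (TSum_nonempty T hTne ℓ p _) ⟨_, rfl⟩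
      · rw [if_neg hℓ]
        exact ⟨0, rfl⟩
    · show (if ℓ < J then TSum T ℓ p (u - ℓ/p) + {β0 ℓ - β0 (J + ℓ % p)}
        else ({0} : Set ℤ)).Finite
      by_cases hℓ : ℓ < J
      · rw [if_pos hℓ]
        exact finite_add (TSum_finite T hTfin ℓ p _) (Set.finite_singleton _)
      · rw [if_neg hℓ]
        exact Set.finite_singleton _
  · intro j hjP
    show A j - {β j} = (A (j % (J+p)) - {β (j % (J+p))}) +
      (if (j % (J+p)) < J then TSum T (j % (J+p)) p (u - (j % (J+p))/p)
        + {β0 (j % (J+p)) - β0 (J + (j % (J+p)) % p)} else ({0} : Set ℤ))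
    set ℓ := j % (J + p) with hℓdef
    set t := j / (J + p) with htdef
    have hPpos : 0 < J + p := by omega
    have hPt : (J + p) * t + ℓ = j := Nat.div_add_mod j (J + p)
    have hℓP : ℓ < J + p := Nat.mod_lt _ hPpos
    have ht1 : 1 ≤ t := by
      rw [htdef, Nat.one_le_div_iff hPpos]
      exact hjP
    have hjJ : J ≤ j := by omega
    have hper := hA'per j hjJ
    by_cases hcase : J ≤ ℓ
    · -- residue in the stable window
      have hmod : (j - J) % p = ℓ - J := by
        have hee : (J + p) * t = p * ((u+1)*t) := by rw [hJ]; ring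
        have he : j - J = (ℓ - J) + (J + p) * t := by omega
        rw [hee] at he
        rw [he, Nat.add_mul_mod_self_left]
        exact Nat.mod_eq_of_lt (by omega)
      have hρj : ρ j = ℓ := by
        simp only [hρdef]
        omega
      have hρℓ : ρ ℓ = ℓ := by
        simp only [hρdef]
        have : (ℓ - J) % p = ℓ - J := Nat.mod_eq_of_lt (by omega)
        omega
      have hμℓ : μ ℓ = 0 := by
        simp only [hμdef]
        exact Nat.div_eq_of_lt (by omega)
      have hβℓ : β ℓ = β0 ℓ := by
        simp only [hβdef, if_pos hcase, hρℓ, hμℓ, hσf]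
        simp
      rw [hper, hρj, if_neg (by omega : ¬ ℓ < J), add_zero_sing, hβℓ]
    · -- residue in the initial window
      push_neg at hcase
      have hmod : (j - J) % p = ℓ % p := by
        have hle : u ≤ (u+1)*t := by nlinarith
        have hle2 : p * u ≤ p * ((u+1)*t) := Nat.mul_le_mul_left p hle
        have h3 : (J+p)*t = p*((u+1)*t) := by rw [hJ]; ring
        have h4 : p * ((u+1)*t - u) = p*((u+1)*t) - p*u := by
          zify [hle, hle2]
          ring
        have he : j - J = ℓ + ((J + p) * t - J) := by omega
        have h2 : (J + p) * t - J = p * ((u+1)*t - u) := by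
          rw [h4, ← h3, hJ]
        rw [h2] at he
        rw [he, Nat.add_mul_mod_self_left]
      have hρj : ρ j = J + ℓ % p := by
        simp only [hρdef]
        rw [hmod]
      have hdm : p * (ℓ / p) + ℓ % p = ℓ := Nat.div_add_mod ℓ p
      have hdu : ℓ / p < u := by
        rw [Nat.div_lt_iff_lt_mul hpp]
        rw [hJ] at hcase
        have : u * p = p * u := Nat.mul_comm _ _
        omega
      have hq : J + ℓ % p = ℓ + (u - ℓ/p)*p := by
        have h5 : p * (u - ℓ/p) = p * u - p * (ℓ/p) := by
          zify [hdu.le, Nat.mul_le_mul_left p hdu.le]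
          ring
        have h6 : (u - ℓ/p)*p = p*(u - ℓ/p) := Nat.mul_comm _ _
        have h7 : p * (ℓ/p) ≤ p * u := Nat.mul_le_mul_left p hdu.le
        omega
      have hiter := A_iter A T p hsum ℓ (u - ℓ/p)
      rw [← hq] at hiter
      have hβℓ : β ℓ = β0 ℓ := by
        simp only [hβdef, if_neg (by omega : ¬ J ≤ ℓ)]
      rw [hper, hρj, hiter, if_pos hcase, hβℓ,
        shiftsub (A ℓ) _ (β0 ℓ) (β0 (J + ℓ % p))]

end SEPhelp

theorem stmt_18 (n : ℕ) (hn : 2 ≤ n) (D : Set ℤ)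
    (hD : D ⊆ Set.Icc 0 ((n : ℤ) ^ 2))
    (hsparse : Sparse n (D - D))
    (α : ℕ → ℤ) (hα : ∀ j, α j ∈ D - D)
    (Cα : Set ℂ)
    (hCα : Cα = restrictedDigitSet n D ∩
      (restrictedDigitSet n D + {piSum (-(n : ℂ) + Complex.I) α}))
    (p : ℕ) (hp : 1 ≤ p) (N : ℕ) (hN : 1 ≤ N) (v : Fin N → ℂ)
    (hattr : Cα = ⋃ i : Fin N,
      (fun x => (-(n : ℂ) + Complex.I) ^ (-(p : ℤ)) * x + v i) '' Cα) :
    ∃ β : ℕ → ℤ, (∀ j, β j ∈ D ∩ (D + {α j})) ∧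
      piSum (-(n : ℂ) + Complex.I) β ∈ Cα ∧
      SEPSets (fun j => (D ∩ (D + {α j})) - {β j}) := by
  classical
  have hbeq : (-(n : ℂ) + Complex.I) = bC n := rfl
  rw [hbeq] at hCα hattr
  have hchar := Cα_char n hn D hD hsparse α hα
  rw [hchar] at hCα
  rw [hCα] at hattr
  obtain ⟨t, hsum⟩ := sumset_step n hn D hD hsparse α hα p hp N hN v hattr
  obtain ⟨β, hβA, hSEP⟩ := SEPhelp.SEP_of_sumsets ((n:ℤ)^2)
    (fun j => D ∩ (D + {α j})) p hp
    (A_nonempty D α hα)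
    (fun j => Set.Subset.trans Set.inter_subset_left hD)
    (fun j => Set.range (fun i => t i j))
    (fun j => ⟨t ⟨0, hN⟩ j, Set.mem_range_self _⟩)
    (fun j => Set.finite_range _)
    hsum
  refine ⟨β, hβA, ?_, hSEP⟩
  rw [hbeq, hCα]
  exact ⟨β, hβA, rfl⟩
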